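/- Let φ : (0, 1] → (0, ∞) be an increasing function and let (l_n)_{n≥0} be a decreasing sequence in (0, 1] with φ(l_n) = 2^{−n} for all n ≥ 0. If ∫₀^{l₀} φ(x)/x dx = ∞, then Σ_{n≥0} 2^{−n} log(1/l_n) = ∞. -/
import Mathlib


open MeasureTheory Filter Set

set_option maxHeartbeats 1000000 in
/-- If `φ : (0,1] → (0,∞)` is increasing, `(l_n)` is a decreasing sequence in `(0,1]` with
`φ(l_n) = 2^{-n}`, and `∫₀^{l₀} φ(x)/x dx = ∞`, then `Σ 2^{-n} log(1/l_n) = ∞`. -/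
theorem statement12 (φ : ℝ → ℝ)
    (hφpos : ∀ x ∈ Set.Ioc (0:ℝ) 1, 0 < φ x)
    (hφmono : MonotoneOn φ (Set.Ioc (0:ℝ) 1))
    (l : ℕ → ℝ) (hl : ∀ n, l n ∈ Set.Ioc (0:ℝ) 1) (hldec : Antitone l)
    (hφl : ∀ n, φ (l n) = (1 / 2 : ℝ) ^ n)
    (hint : ∫⁻ x in Set.Ioc (0:ℝ) (l 0), ENNReal.ofReal (φ x / x) = ⊤) :
    ¬ Summable fun n => (1 / 2 : ℝ) ^ n * Real.log (1 / l n) := by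
  intro hsum
  have hl0 : ∀ n, 0 < l n := fun n => (hl n).1
  have hl1 : ∀ n, l n ≤ 1 := fun n => (hl n).2
  set a : ℕ → ℝ := fun n => Real.log (1 / l n) with ha
  have haeq : ∀ n, a n = - Real.log (l n) := by
    intro n; simp [ha, one_div, Real.log_inv]
  -- summability of c n = (1/2)^n * (log (l n) - log (l (n+1)))
  set c : ℕ → ℝ := fun n => (1/2:ℝ)^n * (Real.log (l n) - Real.log (l (n+1))) with hc
  have hceq : ∀ n, c n = 2 * ((1/2:ℝ)^(n+1) * a (n+1)) - (1/2)^n * a n := by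
    intro n
    rw [hc, haeq, haeq]
    ring
  have hsum2 : Summable fun n => (1/2:ℝ)^(n+1) * a (n+1) :=
    (summable_nat_add_iff 1).2 hsum
  have hsumc : Summable c := by
    have := ((hsum2.mul_left 2).sub hsum)
    exact this.congr fun n => (hceq n).symm
  have hcnn : ∀ n, 0 ≤ c n := by
    intro n
    apply mul_nonneg (by positivity)
    have : Real.log (l (n+1)) ≤ Real.log (l n) :=
      Real.log_le_log (hl0 _) (hldec (Nat.le_succ n))
    linarith
  -- per-piece integral bound
  have hstep : ∀ n, ∫⁻ x in Set.Ioc (l (n+1)) (l n), ENNReal.ofReal (φ x / x)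
      ≤ ENNReal.ofReal (c n) := by
    intro n
    have hab : l (n+1) ≤ l n := hldec (Nat.le_succ n)
    have hpos : (0:ℝ) < l (n+1) := hl0 _
    -- pointwise bound
    have hmono : ∫⁻ x in Set.Ioc (l (n+1)) (l n), ENNReal.ofReal (φ x / x)
        ≤ ∫⁻ x in Set.Ioc (l (n+1)) (l n), ENNReal.ofReal ((1/2:ℝ)^n / x) := by
      apply lintegral_mono_ae
      refine (ae_restrict_iff' measurableSet_Ioc).2 (ae_of_all _ fun x hx => ?_)
      apply ENNReal.ofReal_le_ofReal
      have hx0 : 0 < x := hpos.trans hx.1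
      have hx1 : x ≤ 1 := hx.2.trans (hl1 n)
      have hφx : φ x ≤ (1/2:ℝ)^n := by
        rw [← hφl n]
        exact hφmono ⟨hx0, hx1⟩ (hl n) hx.2
      gcongr
    refine hmono.trans ?_
    -- compute the integral of (1/2)^n / x
    have hInt : IntegrableOn (fun x => (1/2:ℝ)^n / x) (Set.Ioc (l (n+1)) (l n)) := by
      apply (ContinuousOn.integrableOn_Icc ?_).mono_set Set.Ioc_subset_Icc_self
      exact continuousOn_const.div continuousOn_id
        (fun x hx => ne_of_gt (lt_of_lt_of_le hpos hx.1))
    have hnn : 0 ≤ᵐ[volume.restrict (Set.Ioc (l (n+1)) (l n))]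
        fun x => (1/2:ℝ)^n / x := by
      refine (ae_restrict_iff' measurableSet_Ioc).2 (ae_of_all _ fun x hx => ?_)
      have hx0 : 0 < x := hpos.trans hx.1
      positivity
    rw [← MeasureTheory.ofReal_integral_eq_lintegral_ofReal hInt hnn]
    apply ENNReal.ofReal_le_ofReal
    have hval : ∫ x in Set.Ioc (l (n+1)) (l n), (1/2:ℝ)^n / x = c n := by
      rw [← intervalIntegral.integral_of_le hab]
      have h0 : (0:ℝ) ∉ Set.uIcc (l (n+1)) (l n) := by
        rw [Set.uIcc_of_le hab]
        intro h
        exact absurd h.1 (not_le.2 hpos)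
      calc ∫ x in (l (n+1))..(l n), (1/2:ℝ)^n / x
          = ∫ x in (l (n+1))..(l n), (1/2:ℝ)^n * x⁻¹ := by
            simp_rw [div_eq_mul_inv]
        _ = (1/2:ℝ)^n * ∫ x in (l (n+1))..(l n), x⁻¹ := by
            rw [intervalIntegral.integral_const_mul]
        _ = (1/2:ℝ)^n * Real.log (l n / l (n+1)) := by
            rw [integral_inv h0]
        _ = c n := by
            rw [hc, Real.log_div (ne_of_gt (hl0 n)) (ne_of_gt hpos)]
    exact le_of_eq hval
  -- the pieces cover (0, l 0]
  have hcover : Set.Ioc (0:ℝ) (l 0) = ⋃ n, Set.Ioc (l (n+1)) (l n) := by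
    ext x
    constructor
    · rintro ⟨hx0, hxl0⟩
      have hex : ∃ n, l n < x := by
        by_contra h
        push_neg at h
        have hx1 : x ≤ 1 := hxl0.trans (hl1 0)
        have hφx : 0 < φ x := hφpos x ⟨hx0, hx1⟩
        obtain ⟨n, hn⟩ := exists_pow_lt_of_lt_one hφx (by norm_num : (1/2:ℝ) < 1)
        have : φ x ≤ (1/2:ℝ)^n := by
          rw [← hφl n]
          exact hφmono ⟨hx0, hx1⟩ (hl n) (h n)
        linarith
      classical
      have hm := Nat.find_spec hex
      have hm0 : Nat.find hex ≠ 0 := by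
        intro h
        rw [h] at hm
        exact absurd hxl0 (not_le.2 hm)
      obtain ⟨k, hk⟩ := Nat.exists_eq_succ_of_ne_zero hm0
      refine Set.mem_iUnion.2 ⟨k, ?_, ?_⟩
      · rw [hk] at hm; exact hm
      · exact not_lt.1 (Nat.find_min hex (by rw [hk]; exact Nat.lt_succ_self k))
    · intro hx
      obtain ⟨n, hn⟩ := Set.mem_iUnion.1 hx
      exact ⟨(hl0 (n+1)).trans hn.1, hn.2.trans (hldec (Nat.zero_le n))⟩
  have hdisj : Pairwise (Function.onFun Disjoint fun n => Set.Ioc (l (n+1)) (l n)) := by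
    have key : ∀ m n : ℕ, m < n →
        Disjoint (Set.Ioc (l (m+1)) (l m)) (Set.Ioc (l (n+1)) (l n)) := by
      intro m n h
      rw [Set.Ioc_disjoint_Ioc]
      calc min (l m) (l n) ≤ l n := min_le_right _ _
        _ ≤ l (m+1) := hldec h
        _ ≤ max (l (m+1)) (l (n+1)) := le_max_left _ _
    intro m n hmn
    rcases lt_or_gt_of_ne hmn with h | h
    · exact key m n h
    · exact (key n m h).symm
  -- sum up
  have hsplit : ∫⁻ x in Set.Ioc (0:ℝ) (l 0), ENNReal.ofReal (φ x / x)
      = ∑' n, ∫⁻ x in Set.Ioc (l (n+1)) (l n), ENNReal.ofReal (φ x / x) := by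
    rw [hcover]
    exact lintegral_iUnion (fun n => measurableSet_Ioc) hdisj _
  have hfin : ∫⁻ x in Set.Ioc (0:ℝ) (l 0), ENNReal.ofReal (φ x / x)
      ≤ ENNReal.ofReal (∑' n, c n) := by
    rw [hsplit, ENNReal.ofReal_tsum_of_nonneg hcnn hsumc]
    exact ENNReal.tsum_le_tsum hstep
  rw [hint] at hfin
  exact absurd (lt_of_le_of_lt hfin ENNReal.ofReal_lt_top) (lt_irrefl ⊤)
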